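/- arXiv:1502.01166 — 3 statements merged into one kernel-verified Lean document; each statement's English description precedes it below -/
import Mathlib

section
/- With r : ℕ_0^s → ℝ_{>0} summable, the variance bound I_s(f²) - I_s(f)² ≤ ‖f‖²_{K_r} · max_{k ≠ 0} r(k) is sharp: for k* maximizing r over ℕ_0^s \ {0}, the function f = H_{k*} satisfies ‖f‖²_{K_r} = 1/r(k*) and I_s(f²) - I_s(f)² = 1 = ‖f‖²_{K_r} · r(k*). -/
open MeasureTheory Real

/-- The standard Gaussian density on `ℝ^s`. -/
noncomputable def gaussianDensity (s : ℕ) (x : Fin s → ℝ) : ℝ :=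
  (2 * Real.pi) ^ (-(s : ℝ) / 2) * Real.exp (-(∑ j, x j ^ 2) / 2)

/-- The standard Gaussian measure on `ℝ^s`. -/
noncomputable def gaussianMeasure (s : ℕ) : Measure (Fin s → ℝ) :=
  volume.withDensity (fun x => ENNReal.ofReal (gaussianDensity s x))

/-- The Gaussian integral `I_s(f) = ∫ f(x) φ_s(x) dx`. -/
noncomputable def gaussInt (s : ℕ) (f : (Fin s → ℝ) → ℝ) : ℝ :=
  ∫ x, f x * gaussianDensity s x

/-- The `k`-th normalized probabilists' Hermite polynomial. -/
noncomputable def normHermite (k : ℕ) (x : ℝ) : ℝ :=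
  ((Polynomial.hermite k).map (Int.castRingHom ℝ)).eval x / Real.sqrt (Nat.factorial k)

/-- The multivariate normalized Hermite polynomial `H_k(x) = ∏_j H_{k_j}(x_j)`. -/
noncomputable def multiHermite (s : ℕ) (k : Fin s → ℕ) (x : Fin s → ℝ) : ℝ :=
  ∏ j, normHermite (k j) (x j)

/-- The `k`-th Hermite coefficient `f̂(k) = ∫ f(x) H_k(x) φ_s(x) dx`. -/
noncomputable def hermiteCoeff (s : ℕ) (f : (Fin s → ℝ) → ℝ) (k : Fin s → ℕ) : ℝ :=
  ∫ x, f x * multiHermite s k x * gaussianDensity s x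

open Polynomial

noncomputable def He (n : ℕ) (x : ℝ) : ℝ :=
  ((Polynomial.hermite n).map (Int.castRingHom ℝ)).eval x

theorem derivative_hermite (n : ℕ) :
    derivative (hermite n) = C (n : ℤ) * hermite (n - 1) := by
  induction n using Nat.twoStepInduction with
  | zero => simp [hermite_zero]
  | one => simp [hermite_one, hermite_zero]
  | more n ih0 ih1 =>
    rw [show n + 2 - 1 = n + 1 from rfl]
    rw [show (n : ℕ) + 1 - 1 = n from rfl] at ih1
    have hs2 : hermite (n + 2) = X * hermite (n + 1) - derivative (hermite (n + 1)) :=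
      hermite_succ (n + 1)
    have hs1 : hermite (n + 1) = X * hermite n - derivative (hermite n) := hermite_succ n
    have h1 : hermite (n + 1) = X * hermite n - C (n : ℤ) * hermite (n - 1) := by
      rw [hs1, ih0]
    rw [hs2, derivative_sub, derivative_mul, derivative_X, ih1, derivative_mul, derivative_C,
      ih0, h1]
    push_cast
    simp only [map_add, map_one, map_ofNat]
    ring

lemma hasDerivAt_He (n : ℕ) (x : ℝ) :
    HasDerivAt (He n) ((n : ℝ) * He (n - 1) x) x := by
  have h := ((hermite n).map (Int.castRingHom ℝ)).hasDerivAt x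
  refine h.congr_deriv ?_
  rw [derivative_map, derivative_hermite, Polynomial.map_mul, map_C]
  simp [He]

lemma He_succ (n : ℕ) (x : ℝ) :
    He (n + 1) x = x * He n x - (n : ℝ) * He (n - 1) x := by
  have := congrArg (fun p => (Polynomial.map (Int.castRingHom ℝ) p).eval x) (hermite_succ n)
  simp only [Polynomial.map_sub, Polynomial.map_mul, Polynomial.map_X, eval_sub, eval_mul,
    eval_X, derivative_hermite, map_C, eval_C] at this
  simpa [He] using this

lemma hasDerivAt_He_gauss (n : ℕ) (x : ℝ) :
    HasDerivAt (fun y => He n y * Real.exp (-(y ^ 2) / 2))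
      (-(He (n + 1) x * Real.exp (-(x ^ 2) / 2))) x := by
  have hg : HasDerivAt (fun y : ℝ => Real.exp (-(y ^ 2) / 2))
      (-x * Real.exp (-(x ^ 2) / 2)) x := by
    have h1 : HasDerivAt (fun y : ℝ => -(y ^ 2) / 2) (-x) x := by
      have := ((hasDerivAt_pow 2 x).neg).div_const 2
      simpa using this.congr_deriv (by ring)
    simpa [mul_comm] using h1.exp
  have := (hasDerivAt_He n x).mul hg
  refine this.congr_deriv ?_
  rw [He_succ]
  ring

lemma integrable_poly_gauss (p : Polynomial ℝ) :
    Integrable (fun x => p.eval x * Real.exp (-(x ^ 2) / 2)) := by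
  have key : ∀ k : ℕ, Integrable (fun x : ℝ => x ^ k * Real.exp (-(x ^ 2) / 2)) := by
    intro k
    have h := integrable_rpow_mul_exp_neg_mul_sq (b := 1/2) (by norm_num) (s := (k : ℝ))
      (neg_one_lt_zero.trans_le (Nat.cast_nonneg k))
    have h2 : (fun x : ℝ => x ^ k * Real.exp (-(x ^ 2) / 2)) =
        fun x : ℝ => x ^ (k : ℝ) * Real.exp (-(1/2) * x ^ 2) := by
      funext x
      rw [Real.rpow_natCast]
      ring_nf
    rw [h2]
    exact h
  have hexp : (fun x : ℝ => p.eval x * Real.exp (-(x ^ 2) / 2)) =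
      fun x => ∑ i ∈ Finset.range (p.natDegree + 1),
        p.coeff i * (x ^ i * Real.exp (-(x ^ 2) / 2)) := by
    funext x
    rw [Polynomial.eval_eq_sum_range, Finset.sum_mul]
    simp [mul_assoc]
  rw [hexp]
  exact integrable_finset_sum _ fun i _ => (key i).const_mul _

lemma He_zero_eq (x : ℝ) : He 0 x = 1 := by simp [He, hermite_zero]

lemma integrable_He_He (a b : ℕ) :
    Integrable (fun x => He a x * (He b x * Real.exp (-(x ^ 2) / 2))) := by
  have := integrable_poly_gauss ((hermite a).map (Int.castRingHom ℝ) *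
    (hermite b).map (Int.castRingHom ℝ))
  simpa [He, mul_assoc] using this

lemma integral_He_gauss_eq (m n : ℕ) :
    ∫ x, He m x * (He (n + 1) x * Real.exp (-(x ^ 2) / 2)) =
      (m : ℝ) * ∫ x, He (m - 1) x * (He n x * Real.exp (-(x ^ 2) / 2)) := by
  have key := integral_mul_deriv_eq_deriv_mul_of_integrable
    (u := He m) (u' := fun x => (m : ℝ) * He (m - 1) x)
    (v := fun x => He n x * Real.exp (-(x ^ 2) / 2))
    (v' := fun x => -(He (n + 1) x * Real.exp (-(x ^ 2) / 2)))
    (fun x _ => hasDerivAt_He m x) (fun x _ => hasDerivAt_He_gauss n x)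
    (by
      rw [show (He m * fun x => -(He (n + 1) x * Real.exp (-(x ^ 2) / 2)))
        = fun x => -(He m x * (He (n + 1) x * Real.exp (-(x ^ 2) / 2))) from
        funext fun x => by simp [Pi.mul_apply]]
      exact (integrable_He_He m (n + 1)).neg)
    (by
      have := (integrable_He_He (m - 1) n).const_mul (m : ℝ)
      simpa [Pi.mul_def, mul_assoc] using this)
    (by simpa [Pi.mul_def] using integrable_He_He m n)
  simp only [mul_neg, integral_neg, neg_neg, neg_inj] at key
  rw [key, ← integral_const_mul]
  congr 1
  funext x
  ring

lemma integral_gauss_sqrt : ∫ x : ℝ, Real.exp (-(x ^ 2) / 2) = Real.sqrt (2 * Real.pi) := by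
  have h := integral_gaussian (1/2)
  have h2 : (fun x : ℝ => Real.exp (-(1/2) * x ^ 2)) = fun x => Real.exp (-(x ^ 2) / 2) := by
    funext x; ring_nf
  rw [h2] at h
  rw [h]
  congr 1
  ring

lemma He_ortho (n m : ℕ) :
    ∫ x, He m x * (He n x * Real.exp (-(x ^ 2) / 2)) =
      (if m = n then (m.factorial : ℝ) else 0) * Real.sqrt (2 * Real.pi) := by
  induction n generalizing m with
  | zero =>
    simp only [He_zero_eq, one_mul]
    match m with
    | 0 => simpa [He_zero_eq] using integral_gauss_sqrt
    | m' + 1 =>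
      rw [show (fun x => He (m' + 1) x * Real.exp (-(x ^ 2) / 2)) =
        fun x => He 0 x * (He (m' + 1) x * Real.exp (-(x ^ 2) / 2)) from by
          funext x; rw [He_zero_eq]; ring]
      rw [integral_He_gauss_eq 0 m']
      simp
  | succ n ih =>
    rw [integral_He_gauss_eq m n]
    match m with
    | 0 => simp
    | m' + 1 =>
      rw [show m' + 1 - 1 = m' from rfl, ih m']
      rcases eq_or_ne m' n with h | h
      · subst h
        simp [Nat.factorial_succ]
        ring
      · simp [h, fun hh => h (Nat.succ_injective hh)]

lemma two_pi_rpow_neg_half : (2 * Real.pi) ^ (-(1 : ℝ) / 2) = (Real.sqrt (2 * Real.pi))⁻¹ := by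
  rw [neg_div, Real.rpow_neg (by positivity), Real.sqrt_eq_rpow]

lemma normHermite_ortho (a b : ℕ) :
    ∫ x, normHermite a x * normHermite b x *
      ((2 * Real.pi) ^ (-(1 : ℝ) / 2) * Real.exp (-(x ^ 2) / 2)) = if a = b then 1 else 0 := by
  have h : (fun x => normHermite a x * normHermite b x *
      ((2 * Real.pi) ^ (-(1 : ℝ) / 2) * Real.exp (-(x ^ 2) / 2))) =
      fun x => ((Real.sqrt (Nat.factorial a))⁻¹ * (Real.sqrt (Nat.factorial b))⁻¹ *
        (2 * Real.pi) ^ (-(1 : ℝ) / 2)) * (He a x * (He b x * Real.exp (-(x ^ 2) / 2))) := by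
    funext x
    simp only [normHermite, He, div_eq_mul_inv]
    ring
  rw [h, integral_const_mul, He_ortho]
  rcases eq_or_ne a b with rfl | hab
  · rw [if_pos rfl, if_pos rfl, two_pi_rpow_neg_half]
    have h1 : Real.sqrt (Nat.factorial a) * Real.sqrt (Nat.factorial a)
        = (Nat.factorial a : ℝ) := Real.mul_self_sqrt (by positivity)
    have h2 : (0 : ℝ) < Real.sqrt (Nat.factorial a) := by
      apply Real.sqrt_pos.2; exact_mod_cast Nat.factorial_pos a
    have h3 : (0 : ℝ) < Real.sqrt (2 * Real.pi) := by
      apply Real.sqrt_pos.2; positivity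
    field_simp
    rw [sq, h1]
  · simp [hab]

lemma gaussianDensity_prod (s : ℕ) (x : Fin s → ℝ) :
    gaussianDensity s x =
      ∏ j, ((2 * Real.pi) ^ (-(1 : ℝ) / 2) * Real.exp (-(x j ^ 2) / 2)) := by
  rw [Finset.prod_mul_distrib, Finset.prod_const, ← Real.exp_sum, gaussianDensity]
  congr 1
  · rw [Finset.card_univ, Fintype.card_fin, ← Real.rpow_natCast ((2 * Real.pi) ^ (-(1 : ℝ) / 2)) s,
      ← Real.rpow_mul (by positivity)]
    congr 1
    push_cast
    ring
  · congr 1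
    rw [neg_div, ← Finset.sum_div, Finset.sum_neg_distrib]
    simp [neg_div]

lemma multi_ortho (s : ℕ) (k k' : Fin s → ℕ) :
    ∫ x : Fin s → ℝ, multiHermite s k x * multiHermite s k' x * gaussianDensity s x =
      if k = k' then 1 else 0 := by
  have h : (fun x : Fin s → ℝ => multiHermite s k x * multiHermite s k' x * gaussianDensity s x)
      = fun x => ∏ j, (normHermite (k j) (x j) * normHermite (k' j) (x j) *
        ((2 * Real.pi) ^ (-(1 : ℝ) / 2) * Real.exp (-(x j ^ 2) / 2))) := by
    funext x
    rw [multiHermite, multiHermite, gaussianDensity_prod, ← Finset.prod_mul_distrib,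
      ← Finset.prod_mul_distrib]
  rw [h, MeasureTheory.integral_fintype_prod_volume_eq_prod
    (f := fun j y => normHermite (k j) y * normHermite (k' j) y *
      ((2 * Real.pi) ^ (-(1 : ℝ) / 2) * Real.exp (-(y ^ 2) / 2)))]
  simp_rw [normHermite_ortho]
  rcases eq_or_ne k k' with rfl | hkk
  · simp
  · rw [if_neg hkk]
    obtain ⟨j, hj⟩ := Function.ne_iff.1 hkk
    exact Finset.prod_eq_zero (Finset.mem_univ j) (by simp [hj])

lemma multiHermite_zero (s : ℕ) (x : Fin s → ℝ) : multiHermite s 0 x = 1 := by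
  simp [multiHermite, normHermite, hermite_zero]

lemma hermiteCoeff_multiHermite (s : ℕ) (kstar k : Fin s → ℕ) :
    hermiteCoeff s (multiHermite s kstar) k = if kstar = k then 1 else 0 :=
  multi_ortho s kstar k

/-- the variance bound is sharp. If the maximum of `r` over nonzero
multi-indices is attained at `k*`, then `f = H_{k*}` satisfies
`‖f‖²_{K_r} = 1/r(k*)` and `I_s(f²) - I_s(f)² = 1 = ‖f‖²_{K_r} · r(k*)`. -/

theorem variance_bound_sharp (s : ℕ) (r : (Fin s → ℕ) → ℝ)
    (hrpos : ∀ k, 0 < r k) (hrsum : Summable r)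
    (kstar : Fin s → ℕ) (hk0 : kstar ≠ 0)
    (hmax : ∀ k : Fin s → ℕ, k ≠ 0 → r k ≤ r kstar) :
    (∑' k, (r k)⁻¹ * hermiteCoeff s (multiHermite s kstar) k ^ 2) = (r kstar)⁻¹ ∧
    gaussInt s (fun x => multiHermite s kstar x ^ 2)
        - (gaussInt s (multiHermite s kstar)) ^ 2 = 1 ∧
    (1 : ℝ) = (∑' k, (r k)⁻¹ * hermiteCoeff s (multiHermite s kstar) k ^ 2) * r kstar := by
  have htsum : (∑' k, (r k)⁻¹ * hermiteCoeff s (multiHermite s kstar) k ^ 2) = (r kstar)⁻¹ := by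
    rw [tsum_eq_single kstar]
    · rw [hermiteCoeff_multiHermite, if_pos rfl]
      ring
    · intro k hk
      rw [hermiteCoeff_multiHermite, if_neg (fun h => hk h.symm)]
      ring
  have hsq : gaussInt s (fun x => multiHermite s kstar x ^ 2) = 1 := by
    rw [gaussInt]
    have : (fun x => multiHermite s kstar x ^ 2 * gaussianDensity s x) =
        fun x => multiHermite s kstar x * multiHermite s kstar x * gaussianDensity s x := by
      funext x; ring
    rw [this, multi_ortho, if_pos rfl]
  have hlin : gaussInt s (multiHermite s kstar) = 0 := by
    rw [gaussInt]
    have : (fun x => multiHermite s kstar x * gaussianDensity s x) =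
        fun x => multiHermite s kstar x * multiHermite s 0 x * gaussianDensity s x := by
      funext x; rw [multiHermite_zero]; ring
    rw [this, multi_ortho, if_neg hk0]
  refine ⟨htsum, ?_, ?_⟩
  · rw [hsq, hlin]; ring
  · rw [htsum, inv_mul_cancel₀ (hrpos kstar).ne']
end

section
/- For a nonincreasing sequence of positive reals γ_1 ≥ γ_2 ≥ ..., there exist constants C, q > 0 with max_{1 ≤ m ≤ s} ∏_{j=1}^m γ_j ≤ C s^q for all s ≥ 1 if and only if limsup_{s→∞} (∑_{j=1}^s max(log γ_j, 0)) / log s < ∞. -/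
open Real Filter

lemma prod_max_aux (γ : ℕ → ℝ) (hmono : Antitone γ) (s : ℕ) :
    ∃ m, m ≤ s ∧ ∏ j ∈ Finset.range s, max (γ j) 1 = ∏ j ∈ Finset.range m, γ j := by
  induction s with
  | zero => exact ⟨0, le_refl _, by simp⟩
  | succ s ih =>
    by_cases h : 1 ≤ γ s
    · refine ⟨s + 1, le_refl _, Finset.prod_congr rfl fun j hj => ?_⟩
      exact max_eq_left (le_trans h (hmono (Nat.le_of_lt_succ (Finset.mem_range.mp hj))))
    · obtain ⟨m, hm, heq⟩ := ih
      exact ⟨m, hm.trans (Nat.le_succ s), by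
        rw [Finset.prod_range_succ, max_eq_right (le_of_not_ge h), mul_one, heq]⟩

lemma exp_sum_max (γ : ℕ → ℝ) (hpos : ∀ j, 0 < γ j) (s : ℕ) :
    Real.exp (∑ j ∈ Finset.range s, max (Real.log (γ j)) 0) =
      ∏ j ∈ Finset.range s, max (γ j) 1 := by
  rw [Real.exp_sum]
  refine Finset.prod_congr rfl fun j _ => ?_
  rw [Real.exp_strictMono.monotone.map_max, Real.exp_log (hpos j), Real.exp_zero]

/-- for a nonincreasing sequence of positive reals `γ`, the maxima of
partial products grow at most polynomially in `s` iff the limsup of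
`(∑_{j=1}^s max(log γ_j, 0)) / log s` is finite (i.e. the sequence is eventually
bounded above). -/
theorem poly_growth_iff_limsup_finite (γ : ℕ → ℝ) (hpos : ∀ j, 0 < γ j)
    (hmono : Antitone γ) :
    (∃ C q : ℝ, 0 < C ∧ 0 < q ∧ ∀ s : ℕ, ∀ hs : 1 ≤ s,
        (Finset.Icc 1 s).sup' (Finset.nonempty_Icc.mpr hs)
            (fun m => ∏ j ∈ Finset.range m, γ j) ≤ C * (s : ℝ) ^ q) ↔
      (∃ A : ℝ, ∀ᶠ s : ℕ in atTop,
        (∑ j ∈ Finset.range s, max (Real.log (γ j)) 0) / Real.log s ≤ A) := by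
  constructor
  · rintro ⟨C, q, hC, hq, hbound⟩
    refine ⟨max (Real.log C) 0 + q, ?_⟩
    filter_upwards [eventually_ge_atTop 3] with s hs
    have hs1 : 1 ≤ s := by omega
    have hs3 : (3:ℝ) ≤ (s:ℝ) := by exact_mod_cast hs
    have hspos : (0:ℝ) < (s:ℝ) := by linarith
    have hlog1 : (1:ℝ) ≤ Real.log s := by
      rw [Real.le_log_iff_exp_le hspos]
      have := Real.exp_one_lt_d9
      linarith
    have hlogpos : (0:ℝ) < Real.log s := lt_of_lt_of_le one_pos hlog1
    obtain ⟨m, hm, heq⟩ := prod_max_aux γ hmono s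
    have hsum : ∑ j ∈ Finset.range s, max (Real.log (γ j)) 0 =
        Real.log (∏ j ∈ Finset.range m, γ j) := by
      rw [← heq, ← exp_sum_max γ hpos s, Real.log_exp]
    have key : ∑ j ∈ Finset.range s, max (Real.log (γ j)) 0 ≤
        max (Real.log C) 0 + q * Real.log s := by
      rcases Nat.eq_zero_or_pos m with hm0 | hm1
      · rw [hsum, hm0]
        simp only [Finset.range_zero, Finset.prod_empty, Real.log_one]
        have : 0 ≤ q * Real.log s := by positivity
        have : 0 ≤ max (Real.log C) 0 := le_max_right _ _
        linarith
      · have hmem : m ∈ Finset.Icc 1 s := Finset.mem_Icc.mpr ⟨hm1, hm⟩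
        have h1 : ∏ j ∈ Finset.range m, γ j ≤ C * (s:ℝ) ^ q :=
          le_trans (Finset.le_sup' (fun m => ∏ j ∈ Finset.range m, γ j) hmem) (hbound s hs1)
        have hprodpos : 0 < ∏ j ∈ Finset.range m, γ j :=
          Finset.prod_pos fun j _ => hpos j
        have h2 : Real.log (∏ j ∈ Finset.range m, γ j) ≤ Real.log (C * (s:ℝ) ^ q) :=
          Real.log_le_log hprodpos h1
        rw [Real.log_mul (ne_of_gt hC) (by positivity), Real.log_rpow hspos] at h2
        rw [hsum]
        have : Real.log C ≤ max (Real.log C) 0 := le_max_left _ _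
        linarith
    rw [div_le_iff₀ hlogpos]
    have hM : 0 ≤ max (Real.log C) 0 := le_max_right _ _
    nlinarith
  · rintro ⟨A, hA⟩
    obtain ⟨N, hN⟩ := eventually_atTop.mp hA
    set N' := max N 3 with hN'
    set D := Real.exp (∑ j ∈ Finset.range N', max (Real.log (γ j)) 0) with hD
    refine ⟨max D 1, max A 1, lt_of_lt_of_le one_pos (le_max_right _ _),
      lt_of_lt_of_le one_pos (le_max_right _ _), fun s hs1 => ?_⟩
    have hspos : (0:ℝ) < (s:ℝ) := by exact_mod_cast hs1
    have hs1' : (1:ℝ) ≤ (s:ℝ) := by exact_mod_cast hs1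
    -- sup' ≤ exp (sum over range s)
    have hsup : (Finset.Icc 1 s).sup' (Finset.nonempty_Icc.mpr hs1)
        (fun m => ∏ j ∈ Finset.range m, γ j) ≤
        Real.exp (∑ j ∈ Finset.range s, max (Real.log (γ j)) 0) := by
      rw [exp_sum_max γ hpos s]
      refine Finset.sup'_le _ _ fun m hm => ?_
      have hms : m ≤ s := (Finset.mem_Icc.mp hm).2
      calc ∏ j ∈ Finset.range m, γ j ≤ ∏ j ∈ Finset.range m, max (γ j) 1 :=
            Finset.prod_le_prod (fun j _ => (hpos j).le) (fun j _ => le_max_left _ _)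
        _ ≤ ∏ j ∈ Finset.range s, max (γ j) 1 := by
            rw [← Finset.prod_range_mul_prod_Ico (fun j => max (γ j) 1) hms]
            refine le_mul_of_one_le_right ?_ ?_
            · exact Finset.prod_nonneg fun j _ => le_trans zero_le_one (le_max_right _ _)
            · calc (1:ℝ) = ∏ _j ∈ Finset.Ico m s, (1:ℝ) := by simp
                _ ≤ ∏ j ∈ Finset.Ico m s, max (γ j) 1 :=
                  Finset.prod_le_prod (fun j _ => zero_le_one) (fun j _ => le_max_right _ _)
    rcases le_or_gt N' s with hcase | hcase
    · -- large s
      have hsN : N ≤ s := le_trans (le_max_left _ _) hcase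
      have hs3 : (3:ℕ) ≤ s := le_trans (le_max_right _ _) hcase
      have hs1lt : (1:ℝ) < (s:ℝ) := by exact_mod_cast (by omega : 1 < s)
      have hlogpos : (0:ℝ) < Real.log s := Real.log_pos hs1lt
      have hsum : ∑ j ∈ Finset.range s, max (Real.log (γ j)) 0 ≤ A * Real.log s :=
        (div_le_iff₀ hlogpos).mp (hN s hsN)
      calc (Finset.Icc 1 s).sup' (Finset.nonempty_Icc.mpr hs1)
            (fun m => ∏ j ∈ Finset.range m, γ j)
          ≤ Real.exp (∑ j ∈ Finset.range s, max (Real.log (γ j)) 0) := hsup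
        _ ≤ Real.exp (A * Real.log s) := Real.exp_le_exp.mpr hsum
        _ = (s:ℝ) ^ A := by rw [Real.rpow_def_of_pos hspos, mul_comm]
        _ ≤ (s:ℝ) ^ max A 1 :=
            Real.rpow_le_rpow_of_exponent_le hs1' (le_max_left _ _)
        _ ≤ max D 1 * (s:ℝ) ^ max A 1 :=
            le_mul_of_one_le_left (by positivity) (le_max_right _ _)
    · -- small s
      have hsum : ∑ j ∈ Finset.range s, max (Real.log (γ j)) 0 ≤
          ∑ j ∈ Finset.range N', max (Real.log (γ j)) 0 :=
        Finset.sum_le_sum_of_subset_of_nonneg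
          (Finset.range_subset_range.mpr hcase.le)
          (fun j _ _ => le_max_right _ _)
      have hrpow1 : (1:ℝ) ≤ (s:ℝ) ^ max A 1 :=
        Real.one_le_rpow hs1' (by positivity)
      calc (Finset.Icc 1 s).sup' (Finset.nonempty_Icc.mpr hs1)
            (fun m => ∏ j ∈ Finset.range m, γ j)
          ≤ Real.exp (∑ j ∈ Finset.range s, max (Real.log (γ j)) 0) := hsup
        _ ≤ D := Real.exp_le_exp.mpr hsum
        _ ≤ max D 1 := le_max_left _ _
        _ = max D 1 * 1 := (mul_one _).symm
        _ ≤ max D 1 * (s:ℝ) ^ max A 1 :=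
            mul_le_mul_of_nonneg_left hrpow1 (by positivity)
end

section
/- Suppose n^{MC}(ε,s) = ⌈C_s ε^{-2}⌉ where C_s = max_{1 ≤ m ≤ s} ∏_{j=1}^m γ_j for a nonincreasing positive sequence {γ_j}. Then n^{MC}(ε,s) ≤ c ε^{-p} for constants c, p > 0 and all s, ε (strong polynomial tractability) if and only if ∑_{j=1}^∞ max(log γ_j, 0) < ∞, and in that case one may take p = 2. -/
open Real

/-- `C_s = max_{1 ≤ m ≤ s} ∏_{j=1}^m γ_j` (with `γ j` standing for `γ_{j+1}`). -/
noncomputable def Cmax (γ : ℕ → ℝ) (s : ℕ) : ℝ :=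
  sSup {v : ℝ | ∃ m : ℕ, 1 ≤ m ∧ m ≤ s ∧ v = ∏ j ∈ Finset.range m, γ j}

lemma prod_eq_exp_sum_log (γ : ℕ → ℝ) (hpos : ∀ j, 0 < γ j) (m : ℕ) :
    ∏ j ∈ Finset.range m, γ j = Real.exp (∑ j ∈ Finset.range m, Real.log (γ j)) := by
  rw [Real.exp_sum]
  exact Finset.prod_congr rfl fun j _ => (Real.exp_log (hpos j)).symm

lemma prod_le_exp_tsum (γ : ℕ → ℝ) (hpos : ∀ j, 0 < γ j)
    (hs : Summable (fun j => max (Real.log (γ j)) 0)) (m : ℕ) :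
    ∏ j ∈ Finset.range m, γ j ≤ Real.exp (∑' j, max (Real.log (γ j)) 0) := by
  rw [prod_eq_exp_sum_log γ hpos m]
  apply Real.exp_le_exp.mpr
  calc ∑ j ∈ Finset.range m, Real.log (γ j)
      ≤ ∑ j ∈ Finset.range m, max (Real.log (γ j)) 0 :=
        Finset.sum_le_sum fun j _ => le_max_left _ _
    _ ≤ ∑' j, max (Real.log (γ j)) 0 :=
        Summable.sum_le_tsum _ (fun j _ => le_max_right _ _) hs

/-- with `n^{MC}(ε,s) = ⌈C_s ε^{-2}⌉`, strong polynomial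
tractability holds iff `∑_j max(log γ_j, 0) < ∞`, and in that case one may take
`p = 2`. -/
theorem strong_poly_tractability_iff (γ : ℕ → ℝ) (hpos : ∀ j, 0 < γ j)
    (hmono : Antitone γ) :
    ((∃ c p : ℝ, 0 < c ∧ 0 < p ∧ ∀ s : ℕ, 1 ≤ s → ∀ ε : ℝ, ε ∈ Set.Ioo (0 : ℝ) 1 →
        ((⌈Cmax γ s * ε⁻¹ ^ 2⌉₊ : ℕ) : ℝ) ≤ c * ε⁻¹ ^ p) ↔
      Summable (fun j => max (Real.log (γ j)) 0)) ∧
    (Summable (fun j => max (Real.log (γ j)) 0) →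
      ∃ c : ℝ, 0 < c ∧ ∀ s : ℕ, 1 ≤ s → ∀ ε : ℝ, ε ∈ Set.Ioo (0 : ℝ) 1 →
        ((⌈Cmax γ s * ε⁻¹ ^ 2⌉₊ : ℕ) : ℝ) ≤ c * ε⁻¹ ^ 2) := by
  set f : ℕ → ℝ := fun j => max (Real.log (γ j)) 0 with hf
  -- part 2 : summable → bound with p = 2
  have part2 : Summable f →
      ∃ c : ℝ, 0 < c ∧ ∀ s : ℕ, 1 ≤ s → ∀ ε : ℝ, ε ∈ Set.Ioo (0 : ℝ) 1 →
        ((⌈Cmax γ s * ε⁻¹ ^ 2⌉₊ : ℕ) : ℝ) ≤ c * ε⁻¹ ^ 2 := by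
    intro hsum
    set K := Real.exp (∑' j, f j) with hK
    have hKpos : 0 < K := Real.exp_pos _
    refine ⟨K + 1, by positivity, ?_⟩
    intro s hs1 ε hε
    obtain ⟨hε0, hε1⟩ := hε
    have hC : Cmax γ s ≤ K := by
      apply csSup_le
      · exact ⟨γ 0, 1, le_refl 1, hs1, by simp⟩
      · rintro v ⟨m, _, _, rfl⟩
        exact prod_le_exp_tsum γ hpos hsum m
    have hεinv : (1 : ℝ) ≤ ε⁻¹ ^ 2 := by
      have h1 : ε * ε⁻¹ = 1 := mul_inv_cancel₀ hε0.ne'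
      have h2 : (1 : ℝ) ≤ ε⁻¹ := by nlinarith
      nlinarith
    have hεinvpos : (0 : ℝ) < ε⁻¹ ^ 2 := by positivity
    have h1 : Cmax γ s * ε⁻¹ ^ 2 ≤ K * ε⁻¹ ^ 2 :=
      mul_le_mul_of_nonneg_right hC hεinvpos.le
    have h2 : ((⌈Cmax γ s * ε⁻¹ ^ 2⌉₊ : ℕ) : ℝ) ≤ ((⌈K * ε⁻¹ ^ 2⌉₊ : ℕ) : ℝ) := by
      exact_mod_cast Nat.ceil_le_ceil h1
    have h3 : ((⌈K * ε⁻¹ ^ 2⌉₊ : ℕ) : ℝ) ≤ K * ε⁻¹ ^ 2 + 1 :=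
      (Nat.ceil_lt_add_one (by positivity)).le
    nlinarith
  constructor
  · constructor
    · -- tractability → summable
      rintro ⟨c, p, hc, hp, hb⟩
      by_contra hns
      -- all γ j ≥ 1
      have hγ1 : ∀ j, 1 ≤ γ j := by
        intro j
        by_contra h
        push_neg at h
        apply hns
        apply summable_of_ne_finset_zero (s := Finset.range (j + 1))
        intro k hk
        simp only [Finset.mem_range, not_lt] at hk
        have hk' : γ k ≤ γ j := hmono (by omega)
        have : Real.log (γ k) ≤ 0 := Real.log_nonpos (hpos k).le (by linarith)
        simp [hf, max_eq_right this]
      have hflog : ∀ j, f j = Real.log (γ j) := fun j =>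
        max_eq_left (Real.log_nonneg (hγ1 j))
      -- partial sums tend to infinity
      have htend : Filter.Tendsto (fun n => ∑ j ∈ Finset.range n, f j)
          Filter.atTop Filter.atTop := by
        by_contra h
        exact hns ((summable_iff_not_tendsto_nat_atTop_of_nonneg
          (fun j => le_max_right _ _)).mpr h)
      -- pick s with large partial sum
      have hb2 : (0 : ℝ) < c * (2 : ℝ) ^ p := by positivity
      obtain ⟨s, hsS, hs1⟩ :=
        ((Filter.tendsto_atTop.mp htend (c * (2:ℝ) ^ p)).and
          (Filter.eventually_ge_atTop 1)).exists
      -- Cmax γ s ≥ ∏_{range s} γ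
      have hbdd : BddAbove {v : ℝ | ∃ m : ℕ, 1 ≤ m ∧ m ≤ s ∧
          v = ∏ j ∈ Finset.range m, γ j} := by
        refine ⟨∏ j ∈ Finset.range s, γ j, ?_⟩
        rintro v ⟨m, hm1, hms, rfl⟩
        have hone : (1:ℝ) ≤ ∏ j ∈ Finset.Ico m s, γ j := by
          calc (1:ℝ) = ∏ _j ∈ Finset.Ico m s, (1:ℝ) := by simp
          _ ≤ ∏ j ∈ Finset.Ico m s, γ j :=
              Finset.prod_le_prod (by simp) (fun j _ => hγ1 j)
        have hsplit : (∏ j ∈ Finset.range m, γ j) * ∏ j ∈ Finset.Ico m s, γ j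
            = ∏ j ∈ Finset.range s, γ j := Finset.prod_range_mul_prod_Ico γ hms
        have hnn : 0 ≤ ∏ j ∈ Finset.range m, γ j :=
          Finset.prod_nonneg fun j _ => (hpos j).le
        nlinarith
      have hCge : ∏ j ∈ Finset.range s, γ j ≤ Cmax γ s :=
        le_csSup hbdd ⟨s, hs1, le_refl s, rfl⟩
      have hprod : ∏ j ∈ Finset.range s, γ j =
          Real.exp (∑ j ∈ Finset.range s, f j) := by
        rw [prod_eq_exp_sum_log γ hpos s]
        congr 1
        exact Finset.sum_congr rfl fun j _ => (hflog j).symm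
      -- use ε = 1/2
      have hhalf : (1/2 : ℝ) ∈ Set.Ioo (0:ℝ) 1 := by norm_num
      have hbound := hb s hs1 (1/2) hhalf
      have hinv : ((1/2 : ℝ))⁻¹ = 2 := by norm_num
      rw [hinv] at hbound
      have hceil : Cmax γ s * (2:ℝ) ^ 2 ≤ ((⌈Cmax γ s * (2:ℝ) ^ 2⌉₊ : ℕ) : ℝ) := by
        rcases le_or_gt 0 (Cmax γ s * (2:ℝ) ^ 2) with h | h
        · exact Nat.le_ceil _
        · exact le_trans h.le (Nat.cast_nonneg _)
      have hexp : ∑ j ∈ Finset.range s, f j ≤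
          Real.exp (∑ j ∈ Finset.range s, f j) := by
        have := Real.add_one_le_exp (∑ j ∈ Finset.range s, f j)
        linarith
      have hSnonneg : 0 ≤ ∑ j ∈ Finset.range s, f j :=
        Finset.sum_nonneg fun j _ => le_max_right _ _
      nlinarith [hbound, hceil, hexp, hprod, hCge, hsS]
    · -- summable → tractability (p = 2)
      intro hsum
      obtain ⟨c, hc, hb⟩ := part2 hsum
      refine ⟨c, 2, hc, by norm_num, ?_⟩
      intro s hs1 ε hε
      have h2 : ε⁻¹ ^ (2:ℝ) = ε⁻¹ ^ (2:ℕ) := by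
        rw [show ((2:ℝ)) = ((2:ℕ):ℝ) by norm_num, Real.rpow_natCast]
      rw [h2]
      exact hb s hs1 ε hε
  · exact part2
end
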